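/- arXiv:2212.01541 — 2 statements merged into one kernel-verified Lean document; each statement's English description precedes it below -/
import Mathlib

section
/- Let θ: ℝ₊ → ℝ₊ be monotone non-decreasing and θ̃(r) = (log 2)^{-2} ∫_r^{2r} (1/t) ∫_t^{2t} θ(s)/s ds dt. Then θ̃ is differentiable with θ̃'(r) = (log 2)^{-2} ∫_1^2 (θ(2rt) - θ(rt))/(rt) dt ≥ 0; in particular θ̃ is monotone non-decreasing. -/
open Real MeasureTheory

namespace Stmt6Aux

variable {θ : ℝ → ℝ}

/-- integrability of `θ s / s` on positive intervals -/
lemma psi_int (hmono : MonotoneOn θ (Set.Ioi 0)) {a b : ℝ} (ha : 0 < a) (hb : 0 < b) :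
    IntervalIntegrable (fun s => θ s / s) volume a b := by
  have hsub : Set.uIcc a b ⊆ Set.Ioi 0 := fun x hx =>
    lt_of_lt_of_le (lt_min ha hb) hx.1
  have hθ : IntervalIntegrable θ volume a b := (hmono.mono hsub).intervalIntegrable
  have : IntervalIntegrable (fun s => θ s * s⁻¹) volume a b :=
    hθ.mul_continuousOn (ContinuousOn.inv₀ continuousOn_id
      (fun x hx => ne_of_gt (hsub hx)))
  simpa [div_eq_mul_inv] using this

lemma g_contAt (hmono : MonotoneOn θ (Set.Ioi 0)) {t0 : ℝ} (ht0 : 0 < t0) :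
    ContinuousAt (fun t => (1 / t) * ∫ s in t..(2 * t), θ s / s) t0 := by
  set c : ℝ := t0 / 4 with hcdef
  have hc : 0 < c := by positivity
  have hint : IntervalIntegrable (fun s => θ s / s) volume c (8 * t0) :=
    psi_int hmono hc (by positivity)
  have hG : ContinuousOn (fun x => ∫ s in c..x, θ s / s) (Set.uIcc c (8 * t0)) :=
    intervalIntegral.continuousOn_primitive_interval' hint Set.left_mem_uIcc
  have hcc : Set.uIcc c (8 * t0) = Set.Icc c (8 * t0) :=
    Set.uIcc_of_le (by nlinarith)
  have hGat : ∀ x ∈ Set.Ioo c (8 * t0),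
      ContinuousAt (fun x => ∫ s in c..x, θ s / s) x := by
    intro x hx
    refine (hG.continuousAt ?_)
    rw [hcc]
    exact Icc_mem_nhds hx.1 hx.2
  have h1 : ContinuousAt (fun t => ∫ s in c..t, θ s / s) t0 :=
    hGat t0 ⟨by nlinarith, by nlinarith⟩
  have h2 : ContinuousAt (fun t => ∫ s in c..(2 * t), θ s / s) t0 := by
    have := (hGat (2 * t0) ⟨by nlinarith, by nlinarith⟩).comp
      ((continuous_mul_left (2 : ℝ)).continuousAt (x := t0))
    exact this
  have heq : (fun t => (1 / t) * ∫ s in t..(2 * t), θ s / s) =ᶠ[nhds t0]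
      fun t => (1 / t) * ((∫ s in c..(2 * t), θ s / s) - ∫ s in c..t, θ s / s) := by
    filter_upwards [eventually_gt_nhds (show c < t0 by nlinarith)] with t ht
    have ht' : 0 < t := lt_trans hc ht
    rw [intervalIntegral.integral_interval_sub_left
      (psi_int hmono hc (by positivity)) (psi_int hmono hc ht')]
  rw [continuousAt_congr heq]
  exact (continuousAt_const.div continuousAt_id (ne_of_gt ht0)).mul (h2.sub h1)

/-- main derivative lemma, with derivative expressed via g -/
lemma hasDeriv_main (hmono : MonotoneOn θ (Set.Ioi 0)) {r : ℝ} (hr : 0 < r) :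
    HasDerivAt (fun x : ℝ => ∫ t in x..(2 * x), (1 / t) * ∫ s in t..(2 * t), θ s / s)
      (2 * ((1 / (2 * r)) * ∫ s in (2 * r)..(4 * r), θ s / s)
        - (1 / r) * ∫ s in r..(2 * r), θ s / s) r := by
  set g : ℝ → ℝ := fun t => (1 / t) * ∫ s in t..(2 * t), θ s / s with hg
  have gcont : ContinuousOn g (Set.Ioi 0) := fun x hx =>
    (g_contAt hmono hx).continuousWithinAt
  set c : ℝ := r / 2 with hcdef
  have hc : 0 < c := by positivity
  have hgint : ∀ b : ℝ, 0 < b → IntervalIntegrable g volume c b := by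
    intro b hb
    refine (gcont.mono ?_).intervalIntegrable
    intro x hx
    exact lt_of_lt_of_le (lt_min hc hb) hx.1
  have hH : ∀ b : ℝ, 0 < b → HasDerivAt (fun x => ∫ t in c..x, g t) (g b) b := by
    intro b hb
    exact intervalIntegral.integral_hasDerivAt_right (hgint b hb)
      (ContinuousOn.stronglyMeasurableAtFilter isOpen_Ioi gcont b hb)
      (g_contAt hmono hb)
  have hd1 : HasDerivAt (fun x => ∫ t in c..x, g t) (g r) r := hH r hr
  have hd2 : HasDerivAt (fun x => ∫ t in c..(2 * x), g t) (2 * g (2 * r)) r := by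
    have h2x : HasDerivAt (fun x : ℝ => 2 * x) 2 r := by
      simpa using (hasDerivAt_id r).const_mul (2 : ℝ)
    have := (hH (2 * r) (by positivity)).comp r h2x
    rw [mul_comm (g (2 * r)) 2] at this
    exact this
  have hd := hd2.sub hd1
  have heq : (fun x : ℝ => ∫ t in x..(2 * x), g t) =ᶠ[nhds r]
      fun x => (∫ t in c..(2 * x), g t) - ∫ t in c..x, g t := by
    filter_upwards [eventually_gt_nhds (show c < r by simp [hcdef]; linarith)] with x hx
    have hx' : 0 < x := lt_trans hc hx
    rw [intervalIntegral.integral_interval_sub_left (hgint (2 * x) (by positivity))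
      (hgint x hx')]
  have key : HasDerivAt (fun x : ℝ => ∫ t in x..(2 * x), g t)
      (2 * g (2 * r) - g r) r := hd.congr_of_eventuallyEq heq
  have hgr : g r = (1 / r) * ∫ s in r..(2 * r), θ s / s := rfl
  have hg2r : g (2 * r) = (1 / (2 * r)) * ∫ s in (2 * r)..(4 * r), θ s / s := by
    rw [hg]
    norm_num [show (2 : ℝ) * (2 * r) = 4 * r by ring]
  rw [hgr, hg2r] at key
  exact key

/-- the derivative value equality -/
lemma deriv_eq (hmono : MonotoneOn θ (Set.Ioi 0)) {r : ℝ} (hr : 0 < r) :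
    2 * ((1 / (2 * r)) * ∫ s in (2 * r)..(4 * r), θ s / s)
        - (1 / r) * ∫ s in r..(2 * r), θ s / s
      = ∫ t in (1:ℝ)..2, (θ (2 * r * t) - θ (r * t)) / (r * t) := by
  have hr' : r ≠ 0 := ne_of_gt hr
  -- step 1: rewrite RHS as composed integral
  have step1 : (∫ t in (1:ℝ)..2, (θ (2 * r * t) - θ (r * t)) / (r * t))
      = ∫ t in (1:ℝ)..2, (fun u => (θ (2 * u) - θ u) / u) (r * t) := by
    apply intervalIntegral.integral_congr
    intro t _
    simp only [mul_assoc]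
  have step2 : (∫ t in (1:ℝ)..2, (fun u => (θ (2 * u) - θ u) / u) (r * t))
      = r⁻¹ • ∫ u in r..(2 * r), (θ (2 * u) - θ u) / u := by
    rw [intervalIntegral.integral_comp_mul_left (fun u => (θ (2 * u) - θ u) / u) hr']
    norm_num [mul_comm]
  -- integrability pieces
  have hA : IntervalIntegrable (fun u => θ (2 * u) / u) volume r (2 * r) := by
    have base : IntervalIntegrable (fun u => 2 * ((fun s => θ s / s) (2 * u)))
        volume ((2 * r) / 2) ((4 * r) / 2) :=
      ((psi_int hmono (by positivity : (0:ℝ) < 2 * r)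
        (by positivity : (0:ℝ) < 4 * r)).comp_mul_left (c := 2) (by simp) (by simp)).const_mul 2
    have hend : (2 * r) / 2 = r ∧ (4 * r) / 2 = 2 * r := ⟨by ring, by ring⟩
    rw [hend.1, hend.2] at base
    refine base.congr ?_
    have hsub : Set.uIcc r (2 * r) ⊆ Set.Ioi 0 := fun x hx =>
      lt_of_lt_of_le (lt_min hr (by positivity)) hx.1
    intro u hu
    have hu' : 0 < u := by
      rcases hu.1 with h
      have : min r (2 * r) < u := h
      have : r ≤ u ∨ 2 * r ≤ u := by
        rcases le_total r (2 * r) with h' | h'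
        · left; rw [min_eq_left h'] at this; linarith
        · right; rw [min_eq_right h'] at this; linarith
      rcases this with h | h <;> linarith
    field_simp
  have hB : IntervalIntegrable (fun u => θ u / u) volume r (2 * r) :=
    psi_int hmono hr (by positivity)
  have step3 : (∫ u in r..(2 * r), (θ (2 * u) - θ u) / u)
      = (∫ u in r..(2 * r), θ (2 * u) / u) - ∫ u in r..(2 * r), θ u / u := by
    rw [← intervalIntegral.integral_sub hA hB]
    apply intervalIntegral.integral_congr
    intro u _
    simp [sub_div]
  have step4 : (∫ u in r..(2 * r), θ (2 * u) / u)
      = ∫ s in (2 * r)..(4 * r), θ s / s := by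
    have h1 : (∫ u in r..(2 * r), θ (2 * u) / u)
        = ∫ u in r..(2 * r), 2 * ((fun s => θ s / s) (2 * u)) := by
      apply intervalIntegral.integral_congr
      intro u hu
      have hu' : 0 < u := lt_of_lt_of_le (lt_min hr (by positivity)) hu.1
      field_simp
    rw [h1, intervalIntegral.integral_const_mul,
      intervalIntegral.integral_comp_mul_left (fun s => θ s / s) (two_ne_zero)]
    rw [show (2:ℝ) * (2 * r) = 4 * r by ring]
    simp
  rw [step1, step2, step3, step4]
  have hA0 : (∫ s in (2 * r)..(4 * r), θ s / s) = (∫ s in (2 * r)..(4 * r), θ s / s) := rfl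
  field_simp
  rw [smul_eq_mul, ← mul_assoc, mul_one_div_cancel hr', one_mul]

lemma integrand_nonneg (hpos : ∀ r > 0, 0 < θ r) (hmono : MonotoneOn θ (Set.Ioi 0))
    {r : ℝ} (hr : 0 < r) :
    0 ≤ ∫ t in (1:ℝ)..2, (θ (2 * r * t) - θ (r * t)) / (r * t) := by
  apply intervalIntegral.integral_nonneg (by norm_num)
  intro t ht
  have ht1 : (0:ℝ) < t := lt_of_lt_of_le one_pos ht.1
  have h1 : (0:ℝ) < r * t := by positivity
  have h2 : r * t ≤ 2 * r * t := by nlinarith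
  have := hmono (Set.mem_Ioi.2 h1) (Set.mem_Ioi.2 (by nlinarith : (0:ℝ) < 2 * r * t)) h2
  exact div_nonneg (by linarith) (le_of_lt h1)

end Stmt6Aux

theorem stmt6 (θ : ℝ → ℝ) (hpos : ∀ r > 0, 0 < θ r)
    (hmono : MonotoneOn θ (Set.Ioi 0)) :
    ∀ r > 0,
      HasDerivAt (fun r : ℝ => (Real.log 2)⁻¹ ^ 2 *
          ∫ t in r..(2 * r), (1 / t) * ∫ s in t..(2 * t), θ s / s)
        ((Real.log 2)⁻¹ ^ 2 * ∫ t in (1:ℝ)..2, (θ (2 * r * t) - θ (r * t)) / (r * t)) r ∧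
      0 ≤ (Real.log 2)⁻¹ ^ 2 * ∫ t in (1:ℝ)..2, (θ (2 * r * t) - θ (r * t)) / (r * t) ∧
      MonotoneOn (fun r : ℝ => (Real.log 2)⁻¹ ^ 2 *
          ∫ t in r..(2 * r), (1 / t) * ∫ s in t..(2 * t), θ s / s) (Set.Ioi 0) := by
  have key : ∀ r > 0, HasDerivAt (fun r : ℝ => (Real.log 2)⁻¹ ^ 2 *
          ∫ t in r..(2 * r), (1 / t) * ∫ s in t..(2 * t), θ s / s)
        ((Real.log 2)⁻¹ ^ 2 * ∫ t in (1:ℝ)..2, (θ (2 * r * t) - θ (r * t)) / (r * t)) r := by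
    intro r hr
    have h := (Stmt6Aux.hasDeriv_main hmono hr).const_mul ((Real.log 2)⁻¹ ^ 2)
    rwa [Stmt6Aux.deriv_eq hmono hr] at h
  have nonneg : ∀ r > 0,
      0 ≤ (Real.log 2)⁻¹ ^ 2 * ∫ t in (1:ℝ)..2, (θ (2 * r * t) - θ (r * t)) / (r * t) := by
    intro r hr
    exact mul_nonneg (by positivity) (Stmt6Aux.integrand_nonneg hpos hmono hr)
  intro r hr
  refine ⟨key r hr, nonneg r hr, ?_⟩
  have hdiff : DifferentiableOn ℝ (fun r : ℝ => (Real.log 2)⁻¹ ^ 2 *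
      ∫ t in r..(2 * r), (1 / t) * ∫ s in t..(2 * t), θ s / s) (Set.Ioi 0) :=
    fun x hx => ((key x hx).differentiableAt).differentiableWithinAt
  apply monotoneOn_of_deriv_nonneg (convex_Ioi 0) hdiff.continuousOn
  · rw [interior_Ioi]; exact hdiff
  · intro x hx
    rw [interior_Ioi] at hx
    rw [(key x hx).deriv]
    exact nonneg x hx
end

section
/- Let θ: ℝ₊ → ℝ₊ be monotone non-decreasing, and θ̃(r) = (log 2)^{-2} ∫_r^{2r} (1/t) ∫_t^{2t} θ(s)/s ds dt. If θ̃(s) < 1 for all s ∈ [0, 4r], then θ̃'(r) ≤ 1/(r log 2). -/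
open Real MeasureTheory

theorem stmt7 (θ : ℝ → ℝ) (hpos : ∀ r > 0, 0 < θ r)
    (hmono : MonotoneOn θ (Set.Ioi 0)) (r : ℝ) (hr : 0 < r)
    (hsmall : ∀ s ∈ Set.Ioc (0:ℝ) (4 * r),
      (Real.log 2)⁻¹ ^ 2 * (∫ t in s..(2 * s), (1 / t) * ∫ u in t..(2 * t), θ u / u) < 1) :
    deriv (fun r : ℝ => (Real.log 2)⁻¹ ^ 2 *
        ∫ t in r..(2 * r), (1 / t) * ∫ s in t..(2 * t), θ s / s) r
      ≤ 1 / (r * Real.log 2) := by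
  have l2 : (0:ℝ) < Real.log 2 := Real.log_pos one_lt_two
  set f : ℝ → ℝ := fun u => θ u / u with hfdef
  -- interval integrability of f on positive intervals
  have hfi : ∀ a b : ℝ, 0 < a → 0 < b → IntervalIntegrable f volume a b := by
    intro a b ha hb
    have hsub : Set.uIcc a b ⊆ Set.Ioi 0 := by
      intro x hx
      rcases Set.mem_uIcc.mp hx with ⟨h1, _⟩ | ⟨h1, _⟩ <;> simp only [Set.mem_Ioi] <;> linarith
    have hθ : IntervalIntegrable θ volume a b := (hmono.mono hsub).intervalIntegrable
    have : IntervalIntegrable (fun u => θ u * u⁻¹) volume a b := by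
      apply hθ.mul_continuousOn
      exact continuousOn_inv₀.mono fun x hx => (ne_of_gt (hsub hx))
    rw [hfdef]; simpa only [div_eq_mul_inv] using this
  -- continuity of primitives of f
  have hprim : ∀ a x₀ : ℝ, 0 < a → 0 < x₀ →
      ContinuousAt (fun x => ∫ u in a..x, f u) x₀ := by
    intro a x₀ ha hx₀
    have h_int : IntervalIntegrable f volume (min a (x₀/2)) (max a (2*x₀)) :=
      hfi _ _ (lt_min ha (by linarith)) (lt_max_of_lt_left ha)
    have := intervalIntegral.continuousWithinAt_primitive (μ := volume) (f := f)
      (a := a) (b₀ := x₀) (b₁ := x₀/2) (b₂ := 2*x₀) (by simp) h_int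
    exact this.continuousAt (Icc_mem_nhds (by linarith) (by linarith))
  set g : ℝ → ℝ := fun t => ∫ u in t..(2*t), f u with hgdef
  have hgcont : ∀ t₀ : ℝ, 0 < t₀ → ContinuousAt g t₀ := by
    intro t₀ ht₀
    have hdiff : ContinuousAt
        (fun t => (∫ u in (t₀/2)..(2*t), f u) - ∫ u in (t₀/2)..t, f u) t₀ := by
      have h1 : ContinuousAt (fun t : ℝ => ∫ u in (t₀/2)..(2*t), f u) t₀ := by
        have := (hprim (t₀/2) (2*t₀) (by linarith) (by linarith)).comp
          (x := t₀) ((continuous_const.mul continuous_id).continuousAt (x := t₀))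
        exact this
      exact h1.sub (hprim (t₀/2) t₀ (by linarith) ht₀)
    apply hdiff.congr
    filter_upwards [eventually_gt_nhds (show t₀/2 < t₀ by linarith)] with t ht
    rw [intervalIntegral.integral_interval_sub_left
      (hfi _ _ (by linarith) (by linarith)) (hfi _ _ (by linarith) (by linarith))]
  set h : ℝ → ℝ := fun t => (1/t) * g t with hhdef
  have hhcont : ContinuousOn h (Set.Ioi 0) := by
    intro t ht
    have ht0 : (0:ℝ) < t := ht
    exact ((continuousAt_const.div continuousAt_id (ne_of_gt ht0)).mul
      (hgcont t ht0)).continuousWithinAt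
  have hhi : ∀ a b : ℝ, 0 < a → 0 < b → IntervalIntegrable h volume a b := by
    intro a b ha hb
    have hsub : Set.uIcc a b ⊆ Set.Ioi 0 := by
      intro x hx
      rcases Set.mem_uIcc.mp hx with ⟨h1, _⟩ | ⟨h1, _⟩ <;> simp only [Set.mem_Ioi] <;> linarith
    exact (hhcont.mono hsub).intervalIntegrable
  -- derivative of the primitive of h
  have hA : ∀ y : ℝ, 0 < y → HasDerivAt (fun x => ∫ t in r..x, h t) (h y) y := by
    intro y hy
    exact intervalIntegral.integral_hasDerivAt_right (hhi r y hr hy)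
      (hhcont.stronglyMeasurableAtFilter isOpen_Ioi y hy)
      ((hhcont y hy).continuousAt (Ioi_mem_nhds hy))
  have hF : HasDerivAt (fun x => ∫ t in x..(2*x), h t) ((g (2*r) - g r)/r) r := by
    have h2 : HasDerivAt (fun x : ℝ => ∫ t in r..(2*x), h t) (2 * h (2*r)) r := by
      have hin : HasDerivAt (fun x : ℝ => 2*x) 2 r := by
        simpa using (hasDerivAt_id r).const_mul 2
      have hcomp : HasDerivAt (fun x : ℝ => ∫ t in r..(2*x), h t) (h (2*r) * 2) r :=
        (hA (2*r) (by linarith)).comp r hin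
      convert hcomp using 1
      ring
    have h1 : HasDerivAt (fun x => (∫ t in r..(2*x), h t) - ∫ t in r..x, h t)
        (2 * h (2*r) - h r) r := h2.sub (hA r hr)
    have heq : (fun x => (∫ t in r..(2*x), h t) - ∫ t in r..x, h t)
        =ᶠ[nhds r] fun x => ∫ t in x..(2*x), h t := by
      filter_upwards [eventually_gt_nhds hr] with x hx
      rw [intervalIntegral.integral_interval_sub_left (hhi r (2*x) hr (by linarith))
        (hhi r x hr hx)]
    have hres := h1.congr_of_eventuallyEq heq.symm
    convert hres using 1
    show (g (2*r) - g r)/r = 2 * ((1/(2*r)) * g (2*r)) - (1/r) * g r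
    rw [div_eq_iff (ne_of_gt hr)]
    field_simp
    all_goals rfl
  -- θ s < 1 on (0, 4r]
  have hθlt : ∀ s ∈ Set.Ioc (0:ℝ) (4*r), θ s < 1 := by
    rintro s ⟨hs0, hs4⟩
    have step1 : ∀ t ∈ Set.Icc s (2*s), θ s * Real.log 2 ≤ g t := by
      intro t ht
      have ht0 : 0 < t := lt_of_lt_of_le hs0 ht.1
      have hsub : Set.uIcc t (2*t) ⊆ Set.Ioi 0 := by
        intro x hx
        rcases Set.mem_uIcc.mp hx with ⟨h1, _⟩ | ⟨h1, _⟩ <;> simp only [Set.mem_Ioi] <;> linarith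
      have e1 : ∫ u in t..(2*t), θ s / u = θ s * Real.log 2 := by
        simp only [div_eq_mul_inv]
        rw [intervalIntegral.integral_const_mul, integral_inv_of_pos ht0 (by linarith),
          mul_div_assoc, div_self (ne_of_gt ht0), mul_one]
      have hci : IntervalIntegrable (fun u => θ s / u) volume t (2*t) := by
        apply ContinuousOn.intervalIntegrable
        exact continuousOn_const.div continuousOn_id fun x hx => ne_of_gt (hsub hx)
      have e2 : (∫ u in t..(2*t), θ s / u) ≤ ∫ u in t..(2*t), f u := by
        apply intervalIntegral.integral_mono_on (by linarith) hci
          (hfi t (2*t) ht0 (by linarith))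
        intro u hu
        have hu0 : 0 < u := lt_of_lt_of_le ht0 hu.1
        have hθle : θ s ≤ θ u := hmono (Set.mem_Ioi.mpr hs0) (Set.mem_Ioi.mpr hu0)
          (le_trans ht.1 hu.1)
        simp only [hfdef]
        exact (div_le_div_iff_of_pos_right hu0).mpr hθle
      calc θ s * Real.log 2 = ∫ u in t..(2*t), θ s / u := e1.symm
        _ ≤ g t := e2
    have step2 : θ s * Real.log 2 * Real.log 2 ≤ ∫ t in s..(2*s), h t := by
      have e3 : ∫ t in s..(2*s), (1/t) * (θ s * Real.log 2)
          = θ s * Real.log 2 * Real.log 2 := by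
        rw [intervalIntegral.integral_mul_const, integral_one_div_of_pos hs0 (by linarith),
          mul_div_assoc, div_self (ne_of_gt hs0), mul_one]
        ring
      have hsub : Set.uIcc s (2*s) ⊆ Set.Ioi 0 := by
        intro x hx
        rcases Set.mem_uIcc.mp hx with ⟨h1, _⟩ | ⟨h1, _⟩ <;> simp only [Set.mem_Ioi] <;> linarith
      have hci : IntervalIntegrable (fun t => (1/t) * (θ s * Real.log 2)) volume s (2*s) := by
        apply ContinuousOn.intervalIntegrable
        apply ContinuousOn.mul _ continuousOn_const
        exact continuousOn_const.div continuousOn_id fun x hx => ne_of_gt (hsub hx)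
      rw [← e3]
      apply intervalIntegral.integral_mono_on (by linarith) hci (hhi s (2*s) hs0 (by linarith))
      intro t ht
      have ht0 : 0 < t := lt_of_lt_of_le hs0 ht.1
      have hst := step1 t ht
      simp only [hhdef]
      exact mul_le_mul_of_nonneg_left hst (by positivity)
    have h4 := hsmall s ⟨hs0, hs4⟩
    have hc2 : (Real.log 2)⁻¹ ^ 2 * (θ s * Real.log 2 * Real.log 2) = θ s := by
      field_simp
    calc θ s = (Real.log 2)⁻¹ ^ 2 * (θ s * Real.log 2 * Real.log 2) := hc2.symm
      _ ≤ (Real.log 2)⁻¹ ^ 2 * ∫ t in s..(2*s), h t :=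
          mul_le_mul_of_nonneg_left step2 (by positivity)
      _ < 1 := h4
  -- key bound : g (2r) - g r ≤ log 2
  have key : g (2*r) - g r ≤ Real.log 2 := by
    have e5 : (∫ x in r..(2*r), f (2*x)) = 2⁻¹ * g (2*r) := by
      rw [intervalIntegral.integral_comp_mul_left (f := f) (c := 2) two_ne_zero]
      simp only [hgdef, smul_eq_mul]
    have hint2 : IntervalIntegrable (fun x => f (2*x)) volume r (2*r) := by
      have hcomp := (hfi (2*r) (4*r) (by linarith) (by linarith)).comp_mul_left (c := 2)
      have e : (2*r)/2 = r := by ring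
      have e' : (4*r)/2 = 2*r := by ring
      rwa [e, e'] at hcomp
    have esub : g (2*r) - g r = ∫ x in r..(2*r), (2 * f (2*x) - f x) := by
      rw [intervalIntegral.integral_sub ((hint2.const_mul 2)) (hfi r (2*r) hr (by linarith)),
        intervalIntegral.integral_const_mul, e5]
      simp only [hgdef]
      ring
    have e7 : (∫ x in r..(2*r), 1/x) = Real.log 2 := by
      rw [integral_one_div_of_pos hr (by linarith), mul_div_assoc, div_self (ne_of_gt hr),
        mul_one]
    have hub : (∫ x in r..(2*r), (2 * f (2*x) - f x)) ≤ ∫ x in r..(2*r), 1/x := by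
      apply intervalIntegral.integral_mono_on (by linarith)
        ((hint2.const_mul 2).sub (hfi r (2*r) hr (by linarith)))
      · apply ContinuousOn.intervalIntegrable
        apply continuousOn_const.div continuousOn_id
        intro x hx
        rcases Set.mem_uIcc.mp hx with ⟨h1, _⟩ | ⟨h1, _⟩ <;>
          exact ne_of_gt (by simp only [id_eq]; linarith)
      · intro x hx
        have hx0 : 0 < x := lt_of_lt_of_le hr hx.1
        have hθ2 : θ (2*x) < 1 := hθlt (2*x) ⟨by linarith, by linarith [hx.2]⟩
        have hθ0 : 0 < θ x := hpos x hx0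
        have e6 : 2 * f (2*x) - f x = (θ (2*x) - θ x)/x := by
          simp only [hfdef]
          field_simp
        rw [e6]
        exact (div_le_div_iff_of_pos_right hx0).mpr (by linarith)
    calc g (2*r) - g r = ∫ x in r..(2*r), (2 * f (2*x) - f x) := esub
      _ ≤ ∫ x in r..(2*r), 1/x := hub
      _ = Real.log 2 := e7
  -- conclude
  have hder := hF.const_mul ((Real.log 2)⁻¹ ^ 2)
  have final : (Real.log 2)⁻¹ ^ 2 * ((g (2*r) - g r)/r) ≤ 1 / (r * Real.log 2) := by
    have h1 : (Real.log 2)⁻¹ ^ 2 * ((g (2*r) - g r)/r)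
        ≤ (Real.log 2)⁻¹ ^ 2 * (Real.log 2 / r) := by
      apply mul_le_mul_of_nonneg_left _ (by positivity)
      exact (div_le_div_iff_of_pos_right hr).mpr key
    have h2 : (Real.log 2)⁻¹ ^ 2 * (Real.log 2 / r) = 1 / (r * Real.log 2) := by
      field_simp
    exact h1.trans_eq h2
  exact le_trans (le_of_eq hder.deriv) final
end
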